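/- Let 𝒳 and 𝒴 be nonempty finite sets, p_train and p_test probability distributions on 𝒳 with p_train(x) > 0 and p_test(x) > 0 for every x, and p(y|x) a conditional label distribution. Let V_g and V_o be disjoint finite index sets of views; for each view v there is a finite set 𝒳_v, a projection π_v : 𝒳 → 𝒳_v, a feature map φ_v : 𝒳_v × 𝒴 → ℝ^{d_v}, and a parameter θ_v ∈ ℝ^{d_v}; for a distribution p on 𝒳 write p(x_v) = ∑_{x : π_v(x) = x_v} p(x) for its view-v marginal, and assume p_train(π_v x) > 0 and p_test(π_v x) > 0 for all x and all v. For v ∈ V_g set r_v(x) = (p_test(x)/p_train(x))·(p_train(π_v x)/p_test(π_v x)) (the ratio p_test(x_{−v}|x_v)/p_train(x_{−v}|x_v)). Define P̂_θ(y|x) ∝ exp(∑_{v∈V_g} (p_train(π_v x)/p_test(π_v x)) θ_v·φ_v(π_v x, y) + (p_train(x)/p_test(x)) ∑_{v'∈V_o} θ_{v'}·φ_{v'}(π_{v'} x, y)), normalized over y ∈ 𝒴. If P̂_θ satisfies the constraints ∑_{x,y} p_train(x) r_v(x) P̂_θ(y|x) φ_v(π_v x, y) = ∑_{x,y} p_train(x)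 p(y|x) r_v(x) φ_v(π_v x, y) for every v ∈ V_g and ∑_{x,y} p_train(x) P̂_θ(y|x) φ_{v'}(π_{v'} x, y) = ∑_{x,y} p_train(x) p(y|x) φ_{v'}(π_{v'} x, y) for every v' ∈ V_o, then for every conditional label distribution Q satisfying the same constraints, ∑_x p_test(x) ∑_y Q(y|x)(−log Q(y|x)) ≤ ∑_x p_test(x) ∑_y P̂_θ(y|x)(−log P̂_θ(y|x)). That is, the robust multiview covariate shift classifier under logloss has the stated parametric form, with view-specific density ratios p_train(x_v)/p_test(x_v) on generalized views and joint density ratios p_train(x)/p_test(x) on non-generalized views. -/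

import Mathlib

open Finset

private lemma sum_comm₃ {α β γ : Type*} [Fintype α] [Fintype β] [Fintype γ]
    (h : γ → α → β → ℝ) :
    ∑ x, ∑ y, ∑ v, h v x y = ∑ v, ∑ x, ∑ y, h v x y := by
  rw [show (∑ x, ∑ y, ∑ v, h v x y) = ∑ x, ∑ v, ∑ y, h v x y from
    Finset.sum_congr rfl fun x _ => Finset.sum_comm, Finset.sum_comm]



/-- Theorem 2 of the paper: the robust multiview covariate shift
classifier under logloss has the parametric form
`P̂_θ(y|x) ∝ exp(∑_{v∈V_g} (p_train(x_v)/p_test(x_v)) θ_v·φ_v(x_v,y)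
              + (p_train(x)/p_test(x)) ∑_{v'∈V_o} θ_{v'}·φ_{v'}(x_{v'},y))`:
any conditional label distribution `Q` satisfying the same (reweighted and
plain) moment-matching constraints has expected testing conditional entropy at
most that of `P̂_θ`. The disjoint sets of views `V_g` (generalized) and `V_o`
(non-generalized) are modeled as two separate index types `Vg` and `Vo`. -/
theorem robust_multiview_parametric_form
    {X Y Vg Vo : Type*} [Fintype X] [Fintype Y] [Fintype Vg] [Fintype Vo]
    [Nonempty X] [Nonempty Y]
    (ptrain ptest : X → ℝ)
    (htrain_pos : ∀ x, 0 < ptrain x) (htrain_sum : ∑ x, ptrain x = 1)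
    (htest_pos : ∀ x, 0 < ptest x) (htest_sum : ∑ x, ptest x = 1)
    (pcond : X → Y → ℝ)
    (hcond_nonneg : ∀ x y, 0 ≤ pcond x y) (hcond_sum : ∀ x, ∑ y, pcond x y = 1)
    -- generalized views: view spaces, projections, features, parameters
    (Xg : Vg → Type*) [∀ v, Fintype (Xg v)] [∀ v, DecidableEq (Xg v)]
    (πg : (v : Vg) → X → Xg v)
    (dg : Vg → ℕ)
    (φg : (v : Vg) → Xg v → Y → Fin (dg v) → ℝ)
    (θg : (v : Vg) → Fin (dg v) → ℝ)
    -- non-generalized views: view spaces, projections, features, parameters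
    (Xo : Vo → Type*) [∀ v, Fintype (Xo v)] [∀ v, DecidableEq (Xo v)]
    (πo : (v : Vo) → X → Xo v)
    (do_ : Vo → ℕ)
    (φo : (v : Vo) → Xo v → Y → Fin (do_ v) → ℝ)
    (θo : (v : Vo) → Fin (do_ v) → ℝ)
    -- view marginals of the training and testing input distributions
    (mtrain mtest : (v : Vg) → X → ℝ)
    (hmtrain : ∀ v x, mtrain v x =
      ∑ x' ∈ Finset.univ.filter (fun x' => πg v x' = πg v x), ptrain x')
    (hmtest : ∀ v x, mtest v x =
      ∑ x' ∈ Finset.univ.filter (fun x' => πg v x' = πg v x), ptest x')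
    (hmtrain_pos : ∀ v x, 0 < mtrain v x) (hmtest_pos : ∀ v x, 0 < mtest v x)
    -- the ratio r_v(x) = p_test(x_{-v}|x_v)/p_train(x_{-v}|x_v)
    (r : Vg → X → ℝ)
    (hr : ∀ v x, r v x = (ptest x / ptrain x) * (mtrain v x / mtest v x))
    -- the parametric-form predictor
    (Phat : X → Y → ℝ)
    (hPhat : ∀ x y, Phat x y =
      Real.exp ((∑ v, (mtrain v x / mtest v x) * ∑ i, θg v i * φg v (πg v x) y i) +
          (ptrain x / ptest x) * ∑ v', ∑ i, θo v' i * φo v' (πo v' x) y i) /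
        ∑ y', Real.exp
          ((∑ v, (mtrain v x / mtest v x) * ∑ i, θg v i * φg v (πg v x) y' i) +
            (ptrain x / ptest x) * ∑ v', ∑ i, θo v' i * φo v' (πo v' x) y' i))
    -- P̂ satisfies the generalized-view constraints
    (hPhat_g : ∀ (v : Vg) (i : Fin (dg v)),
      ∑ x, ∑ y, ptrain x * r v x * Phat x y * φg v (πg v x) y i =
        ∑ x, ∑ y, ptrain x * pcond x y * r v x * φg v (πg v x) y i)
    -- P̂ satisfies the non-generalized-view constraints
    (hPhat_o : ∀ (v' : Vo) (i : Fin (do_ v')),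
      ∑ x, ∑ y, ptrain x * Phat x y * φo v' (πo v' x) y i =
        ∑ x, ∑ y, ptrain x * pcond x y * φo v' (πo v' x) y i)
    -- an arbitrary conditional label distribution satisfying the same constraints
    (Q : X → Y → ℝ)
    (hQ_nonneg : ∀ x y, 0 ≤ Q x y) (hQ_sum : ∀ x, ∑ y, Q x y = 1)
    (hQ_g : ∀ (v : Vg) (i : Fin (dg v)),
      ∑ x, ∑ y, ptrain x * r v x * Q x y * φg v (πg v x) y i =
        ∑ x, ∑ y, ptrain x * pcond x y * r v x * φg v (πg v x) y i)
    (hQ_o : ∀ (v' : Vo) (i : Fin (do_ v')),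
      ∑ x, ∑ y, ptrain x * Q x y * φo v' (πo v' x) y i =
        ∑ x, ∑ y, ptrain x * pcond x y * φo v' (πo v' x) y i) :
    ∑ x, ptest x * ∑ y, Q x y * (-Real.log (Q x y)) ≤
      ∑ x, ptest x * ∑ y, Phat x y * (-Real.log (Phat x y)) := by
  
  classical
  set f : X → Y → ℝ := fun x y =>
    (∑ v, (mtrain v x / mtest v x) * ∑ i, θg v i * φg v (πg v x) y i) +
      (ptrain x / ptest x) * ∑ v', ∑ i, θo v' i * φo v' (πo v' x) y i with hf
  set Z : X → ℝ := fun x => ∑ y', Real.exp (f x y') with hZ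
  have hZpos : ∀ x, 0 < Z x := fun x =>
    Finset.sum_pos (fun y _ => Real.exp_pos _) Finset.univ_nonempty
  have hPhat' : ∀ x y, Phat x y = Real.exp (f x y) / Z x := fun x y => hPhat x y
  have hPpos : ∀ x y, 0 < Phat x y := fun x y => by
    rw [hPhat']; exact div_pos (Real.exp_pos _) (hZpos x)
  have hPsum : ∀ x, ∑ y, Phat x y = 1 := fun x => by
    simp only [hPhat']
    rw [← Finset.sum_div, div_eq_one_iff_eq (ne_of_gt (hZpos x))]
  have hlogP : ∀ x y, Real.log (Phat x y) = f x y - Real.log (Z x) := fun x y => by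
    rw [hPhat', Real.log_div (Real.exp_ne_zero _) (ne_of_gt (hZpos x)), Real.log_exp]
  have e1 : ∀ (v : Vg) (x : X),
      ptrain x * r v x = ptest x * (mtrain v x / mtest v x) := by
    intro v x
    rw [hr]
    field_simp [ne_of_gt (htrain_pos x), ne_of_gt (hmtest_pos v x)]
  have e2 : ∀ x : X, ptest x * (ptrain x / ptest x) = ptrain x := fun x =>
    mul_div_cancel₀ _ (ne_of_gt (htest_pos x))
  -- key: the ptest-weighted expectation of f is the same for any P satisfying
  -- the moment constraints
  have key : ∀ P : X → Y → ℝ,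
      (∀ (v : Vg) (i : Fin (dg v)),
        ∑ x, ∑ y, ptrain x * r v x * P x y * φg v (πg v x) y i =
          ∑ x, ∑ y, ptrain x * pcond x y * r v x * φg v (πg v x) y i) →
      (∀ (v' : Vo) (i : Fin (do_ v')),
        ∑ x, ∑ y, ptrain x * P x y * φo v' (πo v' x) y i =
          ∑ x, ∑ y, ptrain x * pcond x y * φo v' (πo v' x) y i) →
      ∑ x, ptest x * ∑ y, P x y * f x y =
        (∑ v, ∑ i, θg v i *
            ∑ x, ∑ y, ptrain x * pcond x y * r v x * φg v (πg v x) y i) +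
          ∑ v', ∑ i, θo v' i *
            ∑ x, ∑ y, ptrain x * pcond x y * φo v' (πo v' x) y i := by
    intro P hg ho
    have expand : ∀ x y, ptest x * (P x y * f x y) =
        (∑ v, ∑ i, θg v i * (ptrain x * r v x * P x y * φg v (πg v x) y i)) +
          ∑ v', ∑ i, θo v' i * (ptrain x * P x y * φo v' (πo v' x) y i) := by
      intro x y
      simp only [hf]
      rw [mul_add, mul_add]
      congr 1
      · rw [Finset.mul_sum, Finset.mul_sum]
        refine Finset.sum_congr rfl fun v _ => ?_
        have h1 : ptest x * (P x y * ((mtrain v x / mtest v x) *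
            ∑ i, θg v i * φg v (πg v x) y i)) =
            (ptest x * (mtrain v x / mtest v x)) *
              (P x y * ∑ i, θg v i * φg v (πg v x) y i) := by ring
        rw [h1, ← e1 v x]
        simp only [Finset.mul_sum]
        refine Finset.sum_congr rfl fun i _ => ?_
        ring
      · have h2 : ptest x * (P x y * ((ptrain x / ptest x) *
            ∑ v', ∑ i, θo v' i * φo v' (πo v' x) y i)) =
            (ptest x * (ptrain x / ptest x)) *
              (P x y * ∑ v', ∑ i, θo v' i * φo v' (πo v' x) y i) := by ring
        rw [h2, e2 x]
        simp only [Finset.mul_sum]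
        refine Finset.sum_congr rfl fun v' _ => ?_
        refine Finset.sum_congr rfl fun i _ => ?_
        ring
    calc ∑ x, ptest x * ∑ y, P x y * f x y
        = ∑ x, ∑ y, ptest x * (P x y * f x y) := by
          refine Finset.sum_congr rfl fun x _ => ?_
          rw [Finset.mul_sum]
      _ = (∑ v, ∑ i, θg v i *
              ∑ x, ∑ y, ptrain x * r v x * P x y * φg v (πg v x) y i) +
            ∑ v', ∑ i, θo v' i *
              ∑ x, ∑ y, ptrain x * P x y * φo v' (πo v' x) y i := by
          simp only [expand, Finset.sum_add_distrib]
          congr 1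
          · rw [sum_comm₃ (fun v x y => ∑ i, θg v i *
              (ptrain x * r v x * P x y * φg v (πg v x) y i))]
            refine Finset.sum_congr rfl fun v _ => ?_
            rw [sum_comm₃ (fun i x y => θg v i *
              (ptrain x * r v x * P x y * φg v (πg v x) y i))]
            refine Finset.sum_congr rfl fun i _ => ?_
            simp only [Finset.mul_sum]
          · rw [sum_comm₃ (fun v' x y => ∑ i, θo v' i *
              (ptrain x * P x y * φo v' (πo v' x) y i))]
            refine Finset.sum_congr rfl fun v' _ => ?_
            rw [sum_comm₃ (fun i x y => θo v' i *
              (ptrain x * P x y * φo v' (πo v' x) y i))]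
            refine Finset.sum_congr rfl fun i _ => ?_
            simp only [Finset.mul_sum]
      _ = _ := by
          congr 1
          · exact Finset.sum_congr rfl fun v _ =>
              Finset.sum_congr rfl fun i _ => by rw [hg]
          · exact Finset.sum_congr rfl fun v' _ =>
              Finset.sum_congr rfl fun i _ => by rw [ho]
  -- cross entropy of Q against Phat equals entropy of Phat
  have hform : ∀ (P : X → Y → ℝ), (∀ x, ∑ y, P x y = 1) →
      ∀ x, ∑ y, P x y * (-Real.log (Phat x y)) =
        Real.log (Z x) - ∑ y, P x y * f x y := by
    intro P hP1 x
    have h3 : ∀ y, P x y * (-Real.log (Phat x y)) =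
        P x y * Real.log (Z x) - P x y * f x y := by
      intro y
      rw [hlogP]
      ring
    rw [Finset.sum_congr rfl fun y _ => h3 y, Finset.sum_sub_distrib,
      ← Finset.sum_mul, hP1, one_mul]
  have cross_eq : ∑ x, ptest x * ∑ y, Q x y * (-Real.log (Phat x y)) =
      ∑ x, ptest x * ∑ y, Phat x y * (-Real.log (Phat x y)) := by
    calc ∑ x, ptest x * ∑ y, Q x y * (-Real.log (Phat x y))
        = ∑ x, ptest x * (Real.log (Z x) - ∑ y, Q x y * f x y) :=
          Finset.sum_congr rfl fun x _ => by rw [hform Q hQ_sum x]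
      _ = ∑ x, ptest x * Real.log (Z x) - ∑ x, ptest x * ∑ y, Q x y * f x y := by
          simp only [mul_sub, Finset.sum_sub_distrib]
      _ = ∑ x, ptest x * Real.log (Z x) - ∑ x, ptest x * ∑ y, Phat x y * f x y := by
          rw [key Q hQ_g hQ_o, key Phat hPhat_g hPhat_o]
      _ = ∑ x, ptest x * (Real.log (Z x) - ∑ y, Phat x y * f x y) := by
          simp only [mul_sub, Finset.sum_sub_distrib]
      _ = _ := Finset.sum_congr rfl fun x _ => by rw [hform Phat hPsum x]
  -- Gibbs inequality pointwise in x
  have gibbs : ∀ x, ∑ y, Q x y * (-Real.log (Q x y)) ≤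
      ∑ y, Q x y * (-Real.log (Phat x y)) := by
    intro x
    have hdiff : ∑ y, (Q x y * (-Real.log (Q x y)) -
        Q x y * (-Real.log (Phat x y))) ≤ ∑ y, (Phat x y - Q x y) := by
      refine Finset.sum_le_sum fun y _ => ?_
      rcases eq_or_lt_of_le (hQ_nonneg x y) with hq | hq
      · rw [← hq]
        simp [le_of_lt (hPpos x y)]
      · have hlog : Real.log (Phat x y / Q x y) ≤ Phat x y / Q x y - 1 :=
          Real.log_le_sub_one_of_pos (div_pos (hPpos x y) hq)
        have h4 : Q x y * (-Real.log (Q x y)) - Q x y * (-Real.log (Phat x y)) =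
            Q x y * Real.log (Phat x y / Q x y) := by
          rw [Real.log_div (ne_of_gt (hPpos x y)) (ne_of_gt hq)]
          ring
        rw [h4]
        calc Q x y * Real.log (Phat x y / Q x y)
            ≤ Q x y * (Phat x y / Q x y - 1) :=
              mul_le_mul_of_nonneg_left hlog (le_of_lt hq)
          _ = Phat x y - Q x y := by field_simp
    rw [Finset.sum_sub_distrib, Finset.sum_sub_distrib, hPsum, hQ_sum] at hdiff
    linarith
  calc ∑ x, ptest x * ∑ y, Q x y * (-Real.log (Q x y))
      ≤ ∑ x, ptest x * ∑ y, Q x y * (-Real.log (Phat x y)) :=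
        Finset.sum_le_sum fun x _ =>
          mul_le_mul_of_nonneg_left (gibbs x) (le_of_lt (htest_pos x))
    _ = _ := cross_eq
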